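/- arXiv:1805.10660 — 2 statements merged into one kernel-verified Lean document; each statement's English description precedes it below -/
import Mathlib

section
/- Fix 1 ≤ s ≤ d and define Ψ : ℝ^d → ℝ^d by Ψ(x_1,…,x_d) := (x_1 + … + x_s − 1, x_2, …, x_d). Let F ⊂ ℝ_{≥0}^d be a finite set with x_1 + … + x_s ≥ 1 for all x ∈ F, and let Δ := conv(F) + ℝ_{≥0}^d. Then the smallest convex subset Δ' of ℝ^d containing Ψ(Δ) and satisfying Δ' + ℝ_{≥0}^d = Δ' equals conv(Ψ(F)) + ℝ_{≥0}^d, and every vertex (extreme point) of Δ' is the image under Ψ of a vertex of Δ. -/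
open Pointwise

/-- The nonnegative orthant in `ℝ^d`. -/
def orthant (d : ℕ) : Set (Fin d → ℝ) := {x | ∀ i, 0 ≤ x i}

/-- The linear part of the blowing-up map. -/
noncomputable def psiL (d s : ℕ) : (Fin d → ℝ) →ₗ[ℝ] (Fin d → ℝ) where
  toFun x := fun i => if (i : ℕ) = 0
      then ∑ j ∈ Finset.univ.filter (fun j : Fin d => (j : ℕ) < s), x j
      else x i
  map_add' x y := by
    funext i
    by_cases h : (i : ℕ) = 0 <;> simp [h, Finset.sum_add_distrib]
  map_smul' c x := by
    funext i
    by_cases h : (i : ℕ) = 0 <;> simp [h, Finset.mul_sum]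

/-- The blowing-up map as an affine map. -/
noncomputable def psiA (d s : ℕ) : (Fin d → ℝ) →ᵃ[ℝ] (Fin d → ℝ) where
  toFun x := fun i => if (i : ℕ) = 0
      then (∑ j ∈ Finset.univ.filter (fun j : Fin d => (j : ℕ) < s), x j) - 1
      else x i
  linear := psiL d s
  map_vadd' p v := by
    funext i
    simp only [vadd_eq_add, Pi.add_apply, psiL, LinearMap.coe_mk, AddHom.coe_mk]
    by_cases h : (i : ℕ) = 0 <;> simp [h, Finset.sum_add_distrib] <;> ring

theorem orthant_add_orthant (d : ℕ) : orthant d + orthant d = orthant d := by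
  apply Set.Subset.antisymm
  · rintro z ⟨x, hx, y, hy, rfl⟩
    intro i
    exact add_nonneg (hx i) (hy i)
  · intro z hz
    exact ⟨z, hz, 0, fun i => le_refl 0, by simp⟩

/-- Transformation of a Newton polyhedron under the monomial blowing-up map
`Ψ(x) = (x_1 + … + x_s - 1, x_2, …, x_d)`: the smallest convex set containing `Ψ(Δ)` and
stable under adding the nonnegative orthant is `conv(Ψ(F)) + ℝ_{≥0}^d`, and every vertex of
the latter is the image of a vertex of `Δ`. -/
theorem stmt_2 (d s : ℕ) (hs1 : 1 ≤ s) (hsd : s ≤ d)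
    (F : Finset (Fin d → ℝ)) (hFpos : ∀ x ∈ F, ∀ i, 0 ≤ x i)
    (hF1 : ∀ x ∈ F, 1 ≤ ∑ i ∈ Finset.univ.filter (fun i : Fin d => (i : ℕ) < s), x i)
    (Ψ : (Fin d → ℝ) → (Fin d → ℝ))
    (hΨ : ∀ x, Ψ x = fun i : Fin d => if (i : ℕ) = 0
        then (∑ j ∈ Finset.univ.filter (fun j : Fin d => (j : ℕ) < s), x j) - 1
        else x i) :
    (Convex ℝ (convexHull ℝ (Ψ '' (F : Set (Fin d → ℝ))) + orthant d) ∧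
     Ψ '' (convexHull ℝ (F : Set (Fin d → ℝ)) + orthant d) ⊆
       convexHull ℝ (Ψ '' (F : Set (Fin d → ℝ))) + orthant d ∧
     (convexHull ℝ (Ψ '' (F : Set (Fin d → ℝ))) + orthant d) + orthant d =
       convexHull ℝ (Ψ '' (F : Set (Fin d → ℝ))) + orthant d ∧
     (∀ S : Set (Fin d → ℝ), Convex ℝ S →
        Ψ '' (convexHull ℝ (F : Set (Fin d → ℝ)) + orthant d) ⊆ S →
        S + orthant d = S →
        convexHull ℝ (Ψ '' (F : Set (Fin d → ℝ))) + orthant d ⊆ S)) ∧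
    (∀ v ∈ Set.extremePoints ℝ (convexHull ℝ (Ψ '' (F : Set (Fin d → ℝ))) + orthant d),
      ∃ w ∈ Set.extremePoints ℝ (convexHull ℝ (F : Set (Fin d → ℝ)) + orthant d),
        Ψ w = v) := by
  have hd : 0 < d := lt_of_lt_of_le hs1 hsd
  have hΨA : Ψ = psiA d s := by
    funext x
    rw [hΨ]; rfl
  -- Ψ of a sum decomposes as Ψ x + L y
  have hadd : ∀ x y : Fin d → ℝ, Ψ (x + y) = Ψ x + psiL d s y := by
    intro x y
    funext i
    simp only [hΨ, psiL, Pi.add_apply, LinearMap.coe_mk, AddHom.coe_mk]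
    by_cases h : (i : ℕ) = 0 <;> simp [h, Finset.sum_add_distrib] <;> ring
  -- the linear part preserves the orthant
  have hLorth : ∀ y ∈ orthant d, psiL d s y ∈ orthant d := by
    intro y hy i
    simp only [psiL, LinearMap.coe_mk, AddHom.coe_mk]
    by_cases h : (i : ℕ) = 0
    · simp only [h, if_true]
      exact Finset.sum_nonneg fun j _ => hy j
    · simp only [h, if_false]
      exact hy i
  have horth : (0 : Fin d → ℝ) ∈ orthant d := fun i => le_refl 0
  -- image of convex hull
  have himg : Ψ '' (convexHull ℝ (F : Set (Fin d → ℝ))) =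
      convexHull ℝ (Ψ '' (F : Set (Fin d → ℝ))) := by
    rw [hΨA]
    exact AffineMap.image_convexHull (psiA d s) _
  -- statement 2
  have h2 : Ψ '' (convexHull ℝ (F : Set (Fin d → ℝ)) + orthant d) ⊆
      convexHull ℝ (Ψ '' (F : Set (Fin d → ℝ))) + orthant d := by
    rintro z ⟨p, ⟨u, hu, y, hy, rfl⟩, rfl⟩
    rw [hadd u y]
    exact Set.add_mem_add (himg ▸ Set.mem_image_of_mem Ψ hu) (hLorth y hy)
  -- injectivity of Ψ
  have hinj : Function.Injective Ψ := by
    intro a b hab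
    have hcoord : ∀ i : Fin d, (i : ℕ) ≠ 0 → a i = b i := by
      intro i hi
      have := congrFun hab i
      simpa [hΨ, hi] using this
    funext i
    by_cases hi : (i : ℕ) = 0
    · set T := Finset.univ.filter (fun j : Fin d => (j : ℕ) < s) with hT
      have hiT : i ∈ T := by
        simp only [hT, Finset.mem_filter, Finset.mem_univ, true_and, hi]
        omega
      have hsum : ∑ j ∈ T, a j = ∑ j ∈ T, b j := by
        have := congrFun hab i
        simp only [hΨ, if_pos hi] at this
        linarith
      have h2' : ∑ j ∈ T.erase i, a j = ∑ j ∈ T.erase i, b j := by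
        apply Finset.sum_congr rfl
        intro j hj
        apply hcoord
        intro h0
        exact (Finset.ne_of_mem_erase hj) (Fin.ext (by omega))
      have ha := Finset.add_sum_erase T a hiT
      have hb := Finset.add_sum_erase T b hiT
      rw [← ha, ← hb, h2'] at hsum
      linarith
    · exact hcoord i hi
  refine ⟨⟨?_, h2, ?_, ?_⟩, ?_⟩
  · -- convexity
    exact Convex.add (convex_convexHull ℝ _)
      (fun x hx y hy a b ha hb hab i => by
        have := hx i; have := hy i
        simp only [Pi.add_apply, Pi.smul_apply, smul_eq_mul]
        nlinarith)
  · -- absorbing the orthant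
    rw [add_assoc, orthant_add_orthant]
  · -- minimality
    intro S hSconv hSsub hSorth
    rintro z ⟨u, hu, y, hy, rfl⟩
    have huS : u ∈ S := by
      apply hSsub
      rw [← himg] at hu
      obtain ⟨p, hp, rfl⟩ := hu
      exact ⟨p, ⟨p, hp, 0, horth, by simp⟩, rfl⟩
    rw [← hSorth]
    exact Set.add_mem_add huS hy
  · -- extreme points
    intro v hv
    obtain ⟨hvmem, hvext⟩ := hv
    -- first: v lies in the convex hull (its orthant part is 0)
    obtain ⟨u, hu, y, hy, huy⟩ := hvmem
    have hy0 : u = v := by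
      have hu' : u ∈ convexHull ℝ (Ψ '' (F : Set (Fin d → ℝ))) + orthant d :=
        ⟨u, hu, 0, horth, by simp⟩
      have hu2 : u + 2 • y ∈ convexHull ℝ (Ψ '' (F : Set (Fin d → ℝ))) + orthant d :=
        ⟨u, hu, 2 • y, fun i => by
          simpa using mul_nonneg (by norm_num : (0:ℝ) ≤ 2) (hy i), rfl⟩
      have hseg : v ∈ openSegment ℝ u (u + 2 • y) := by
        refine ⟨1/2, 1/2, by norm_num, by norm_num, by norm_num, ?_⟩
        rw [← huy]
        funext i
        simp only [Pi.add_apply, Pi.smul_apply, smul_eq_mul]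
        ring
      exact hvext hu' hu2 hseg
    have hv_hull : v ∈ convexHull ℝ (Ψ '' (F : Set (Fin d → ℝ))) := hy0 ▸ hu
    rw [← himg] at hv_hull
    obtain ⟨w, hw, hwv⟩ := hv_hull
    refine ⟨w, ⟨⟨w, hw, 0, horth, by simp⟩, ?_⟩, hwv⟩
    intro a ha b hb hwseg
    have hΨseg : Ψ w ∈ openSegment ℝ (Ψ a) (Ψ b) := by
      rw [hΨA] at *
      rw [← image_openSegment ℝ (psiA d s) a b]
      exact Set.mem_image_of_mem _ hwseg
    have haA : Ψ a ∈ convexHull ℝ (Ψ '' (F : Set (Fin d → ℝ))) + orthant d :=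
      h2 (Set.mem_image_of_mem Ψ ha)
    have hbA : Ψ b ∈ convexHull ℝ (Ψ '' (F : Set (Fin d → ℝ))) + orthant d :=
      h2 (Set.mem_image_of_mem Ψ hb)
    rw [hwv] at hΨseg
    have hav := hvext haA hbA hΨseg
    · apply hinj; rw [hav, ← hwv]
end

section
/- Let Δ, Δ' ⊂ ℝ_{≥0}^d each be of the form conv(F) + ℝ_{≥0}^d for finite sets F, F' (possibly empty, with the convention that the polyhedron is then empty). Suppose that for every linear form Λ : ℝ^d → ℝ with strictly positive coefficients one has inf { Λ(x) | x ∈ Δ } = inf { Λ(x) | x ∈ Δ' } (with inf ∅ = +∞). Then Δ = Δ'. -/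
open Pointwise

namespace Stmt19Aux

variable {d : ℕ}

/-- The nonnegative orthant. -/
def S (d : ℕ) : Set (Fin d → ℝ) := {x : Fin d → ℝ | ∀ i, 0 ≤ x i}

lemma convex_S : Convex ℝ (S d) := by
  intro x hx y hy a b ha hb _
  intro i
  show 0 ≤ a * x i + b * y i
  exact add_nonneg (mul_nonneg ha (hx i)) (mul_nonneg hb (hy i))

lemma closed_S : IsClosed (S d) := by
  have : S d = ⋂ i, (fun x : Fin d → ℝ => x i) ⁻¹' Set.Ici 0 := by
    ext x; simp [S, Set.mem_iInter]
  rw [this]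
  exact isClosed_iInter fun i => (isClosed_Ici).preimage (continuous_apply i)

lemma mem_S_of_mem (F : Finset (Fin d → ℝ)) (hF : ∀ x ∈ F, ∀ i, 0 ≤ x i)
    {z : Fin d → ℝ} (hz : z ∈ convexHull ℝ (F : Set (Fin d → ℝ)) + S d) :
    ∀ i, 0 ≤ z i := by
  obtain ⟨c, hc, s, hs, rfl⟩ := hz
  have hsub : convexHull ℝ (F : Set (Fin d → ℝ)) ⊆ S d :=
    convexHull_min (fun x hx i => hF x hx i) convex_S
  intro i
  exact add_nonneg (hsub hc i) (hs i)

/-- Main one-sided lemma: if every lower bound of a positive linear form on `Δ'` is a lower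
bound on `Δ`, then `Δ ⊆ Δ'`. -/
lemma subset_of_lower_bounds (F F' : Finset (Fin d → ℝ))
    (hFpos : ∀ x ∈ F, ∀ i, 0 ≤ x i) (hF'pos : ∀ x ∈ F', ∀ i, 0 ≤ x i)
    (himp : ∀ lam : Fin d → ℝ, (∀ i, 0 < lam i) → ∀ cl : ℝ,
      (∀ x ∈ convexHull ℝ (F' : Set (Fin d → ℝ)) + S d, cl ≤ ∑ i, lam i * x i) →
      (∀ x ∈ convexHull ℝ (F : Set (Fin d → ℝ)) + S d, cl ≤ ∑ i, lam i * x i)) :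
    convexHull ℝ (F : Set (Fin d → ℝ)) + S d ⊆ convexHull ℝ (F' : Set (Fin d → ℝ)) + S d := by
  intro x hx
  by_contra hxmem
  -- First, a positive linear form: if Δ' is empty the hypothesis is vacuous.
  rcases eq_or_ne F' ∅ with hF'e | hF'ne
  · -- Δ' is empty, take lam = 1 and a big cl.
    subst hF'e
    have hempty : convexHull ℝ ((∅ : Finset (Fin d → ℝ)) : Set (Fin d → ℝ)) + S d = ∅ := by
      simp [Set.empty_add]
    have h1 : ∀ i : Fin d, (0 : ℝ) < (fun _ => (1 : ℝ)) i := fun _ => one_pos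
    have := himp (fun _ => 1) h1 (∑ i, (1 : ℝ) * x i + 1)
      (by rw [hempty]; intro y hy; exact absurd hy (Set.notMem_empty y)) x hx
    linarith
  · -- Δ' is nonempty, closed, convex: separate x from it.
    set Δ' := convexHull ℝ (F' : Set (Fin d → ℝ)) + S d with hΔ'
    have hconv : Convex ℝ Δ' := (convex_convexHull ℝ _).add convex_S
    have hclosed : IsClosed Δ' :=
      IsClosed.add_left_of_isCompact closed_S ((F' : Set (Fin d → ℝ)).toFinite.isCompact_convexHull ℝ)
    obtain ⟨f, u, hfx, hfb⟩ := geometric_hahn_banach_point_closed hconv hclosed hxmem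
    -- representation of f as a sum
    set e : Fin d → Fin d → ℝ := fun i j => if i = j then 1 else 0 with he
    have henn : ∀ i j, 0 ≤ e i j := by
      intro i j; rw [he]; dsimp only; split <;> norm_num
    have hrep : ∀ y : Fin d → ℝ, f y = ∑ i, y i * f (e i) := by
      intro y
      have := (f : (Fin d → ℝ) →ₗ[ℝ] ℝ).pi_apply_eq_sum_univ y
      simpa [smul_eq_mul, he] using this
    -- Δ' contains points of F'
    obtain ⟨v0, hv0⟩ := Finset.nonempty_iff_ne_empty.2 hF'ne
    have hv0Δ' : v0 ∈ Δ' := ⟨v0, subset_convexHull ℝ _ (by exact_mod_cast hv0), 0,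
      fun i => le_refl 0, by simp⟩
    -- Δ' is stable under adding nonnegative vectors
    have hstab : ∀ y ∈ Δ', ∀ s ∈ S d, y + s ∈ Δ' := by
      rintro y ⟨c, hc, t, ht, rfl⟩ s hs
      exact ⟨c, hc, t + s, fun i => add_nonneg (ht i) (hs i), (add_assoc c t s).symm⟩
    -- coefficients of f are nonnegative
    have hfnn : ∀ i, 0 ≤ f (e i) := by
      intro i
      by_contra hneg
      push_neg at hneg
      set t : ℝ := (f v0 - u) / (-f (e i)) + 1 with ht
      have htpos : 0 ≤ t := by
        have h1 : 0 < -f (e i) := by linarith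
        have h2 : 0 < f v0 - u := by linarith [hfb v0 hv0Δ']
        positivity
      have hmem : v0 + t • e i ∈ Δ' := by
        refine hstab v0 hv0Δ' _ (fun j => ?_)
        exact mul_nonneg htpos (henn i j)
      have := hfb _ hmem
      rw [map_add, map_smul] at this
      have hne : -f (e i) ≠ 0 := by linarith
      have : u < f v0 + t * f (e i) := by simpa [smul_eq_mul] using this
      rw [ht] at this
      have hdiv : ((f v0 - u) / (-f (e i)) + 1) * f (e i)
          = -(f v0 - u) + f (e i) := by
        have hne' : f (e i) ≠ 0 := by linarith
        field_simp
      rw [hdiv] at this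
      linarith
    -- x is nonnegative, so ∑ x i ≥ 0
    have hxnn : ∀ i, 0 ≤ x i := mem_S_of_mem F hFpos hx
    set A : ℝ := ∑ i, x i with hA
    have hAnn : 0 ≤ A := Finset.sum_nonneg fun i _ => hxnn i
    set ε : ℝ := (u - f x) / (2 * (A + 1)) with hε
    have hεpos : 0 < ε := by
      have : 0 < u - f x := by linarith
      positivity
    have hεA : ε * A < u - f x := by
      have h1 : ε * A < ε * (2 * (A + 1)) := by
        have : A < 2 * (A + 1) := by linarith
        exact (mul_lt_mul_iff_right₀ hεpos).2 this
      have h2 : ε * (2 * (A + 1)) = u - f x := by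
        rw [hε]; field_simp
      linarith
    -- the perturbed positive linear form
    set lam : Fin d → ℝ := fun i => f (e i) + ε with hlam
    have hlampos : ∀ i, 0 < lam i := fun i => by
      have := hfnn i; simp only [hlam]; linarith
    have hval : ∀ y : Fin d → ℝ, ∑ i, lam i * y i = f y + ε * ∑ i, y i := by
      intro y
      rw [hrep y, Finset.mul_sum, ← Finset.sum_add_distrib]
      exact Finset.sum_congr rfl fun i _ => by ring
    -- u is a lower bound for lam on Δ'
    have hlb : ∀ y ∈ Δ', u ≤ ∑ i, lam i * y i := by
      intro y hy
      have hynn : ∀ i, 0 ≤ y i := mem_S_of_mem F' hF'pos hy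
      have h1 : 0 ≤ ∑ i, y i := Finset.sum_nonneg fun i _ => hynn i
      have h2 := hfb y hy
      rw [hval y]
      nlinarith
    have := himp lam hlampos u hlb x hx
    rw [hval x] at this
    linarith

end Stmt19Aux

/-- Two Newton-type polyhedra `Δ = conv(F) + ℝ_{≥0}^d` and `Δ' = conv(F') + ℝ_{≥0}^d`
(possibly empty) whose infima `δ_Λ` agree for every linear form `Λ` with strictly positive
coefficients (equality of infima, including the value `+∞` for the empty polyhedron,
being expressed as equality of the sets of lower bounds) are equal. -/
theorem stmt_19 (d : ℕ) (F F' : Finset (Fin d → ℝ))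
    (hFpos : ∀ x ∈ F, ∀ i, 0 ≤ x i) (hF'pos : ∀ x ∈ F', ∀ i, 0 ≤ x i)
    (h : ∀ lam : Fin d → ℝ, (∀ i, 0 < lam i) → ∀ cl : ℝ,
      (∀ x ∈ convexHull ℝ (F : Set (Fin d → ℝ)) + {x : Fin d → ℝ | ∀ i, 0 ≤ x i},
          cl ≤ ∑ i, lam i * x i) ↔
      (∀ x ∈ convexHull ℝ (F' : Set (Fin d → ℝ)) + {x : Fin d → ℝ | ∀ i, 0 ≤ x i},
          cl ≤ ∑ i, lam i * x i)) :
    convexHull ℝ (F : Set (Fin d → ℝ)) + {x : Fin d → ℝ | ∀ i, 0 ≤ x i} =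
      convexHull ℝ (F' : Set (Fin d → ℝ)) + {x : Fin d → ℝ | ∀ i, 0 ≤ x i} := by
  apply Set.Subset.antisymm
  · exact Stmt19Aux.subset_of_lower_bounds F F' hFpos hF'pos
      (fun lam hlam cl hcl => (h lam hlam cl).mpr hcl)
  · exact Stmt19Aux.subset_of_lower_bounds F' F hF'pos hFpos
      (fun lam hlam cl hcl => (h lam hlam cl).mp hcl)
end
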